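/- Let n and x be natural numbers with x ≤ n, and let τ (respectively τ') be the unique number in (0,1) satisfying I_n(τ, x) = I_n(1 − τ, n − x) (respectively I_n(τ', n − x) = I_n(1 − τ', x)). Then τ + τ' = 1. In particular, if n = 2x then τ = 1/2. -/

import Mathlib

/-- `I_n(a, x) = a^{x+2} ∫₀¹ t^{x+1} (1 − t) (1 − a t)^{n−x} dt`. -/
noncomputable def In (n x : ℕ) (a : ℝ) : ℝ :=
  a ^ (x + 2) * ∫ t in (0 : ℝ)..1, t ^ (x + 1) * (1 - t) * (1 - a * t) ^ (n - x)

open MeasureTheory Set intervalIntegral in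
/-- The primitive `a ↦ ∫₀^a s^k (1 - s)^m ds`. -/
noncomputable def Prim (k m : ℕ) (a : ℝ) : ℝ := ∫ s in (0:ℝ)..a, s ^ k * (1 - s) ^ m

lemma Prim_cont (k m : ℕ) : Continuous fun s : ℝ => s ^ k * (1 - s) ^ m := by fun_prop

open MeasureTheory Set intervalIntegral in
/-- Change of variables `s = a t`: `In n x a = Prim (x+1) (n-x) a - Prim (x+2) (n-x) a / a`. -/
lemma In_rep (n x : ℕ) {a : ℝ} (ha : a ≠ 0) :
    In n x a = Prim (x+1) (n-x) a - Prim (x+2) (n-x) a / a := by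
  set m := n - x
  have key := intervalIntegral.integral_comp_mul_right
    (a := (0:ℝ)) (b := 1) (fun s => s ^ (x+1) * (a - s) * (1 - s) ^ m) ha
  have h1 : (fun t : ℝ => (t * a) ^ (x+1) * (a - t * a) * (1 - t * a) ^ m)
      = fun t : ℝ => a ^ (x+2) * (t ^ (x+1) * (1 - t) * (1 - a * t) ^ m) := by
    funext t; ring_nf
  have h2 : ∀ s : ℝ, s ^ (x+1) * (a - s) * (1 - s) ^ m
      = a * (s ^ (x+1) * (1 - s) ^ m) - s ^ (x+2) * (1 - s) ^ m := by
    intro s; ring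
  have hInt1 : IntervalIntegrable (fun s : ℝ => s ^ (x+1) * (1 - s) ^ m) volume 0 a :=
    (Prim_cont _ _).intervalIntegrable _ _
  have hInt2 : IntervalIntegrable (fun s : ℝ => s ^ (x+2) * (1 - s) ^ m) volume 0 a :=
    (Prim_cont _ _).intervalIntegrable _ _
  simp only [h1] at key
  rw [intervalIntegral.integral_const_mul] at key
  have key2 : (∫ s in (0:ℝ)..(1*a), s ^ (x+1) * (a - s) * (1 - s) ^ m)
      = a * Prim (x+1) m a - Prim (x+2) m a := by
    rw [one_mul]
    simp only [h2]
    rw [intervalIntegral.integral_sub (hInt1.const_mul a) hInt2,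
      intervalIntegral.integral_const_mul]
    rfl
  rw [zero_mul] at key
  rw [key2] at key
  have : In n x a = a ^ (x+2) * ∫ t in (0:ℝ)..1, t ^ (x+1) * (1 - t) * (1 - a * t) ^ m := rfl
  rw [this, key, smul_eq_mul]
  field_simp

open MeasureTheory Set intervalIntegral in
lemma Prim_hasDerivAt (k m : ℕ) (a : ℝ) :
    HasDerivAt (Prim k m) (a ^ k * (1 - a) ^ m) a :=
  integral_hasDerivAt_right ((Prim_cont k m).intervalIntegrable _ _)
    ((Prim_cont k m).stronglyMeasurableAtFilter _ _) (Prim_cont k m).continuousAt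

open MeasureTheory Set intervalIntegral in
lemma Prim_pos (k m : ℕ) {a : ℝ} (ha : a ∈ Ioo (0:ℝ) 1) : 0 < Prim k m a := by
  apply intervalIntegral_pos_of_pos_on ((Prim_cont k m).intervalIntegrable _ _)
  · intro s hs
    have h1 : 0 < s := hs.1
    have h2 : s < 1 := lt_trans hs.2 ha.2
    have h3 : (0:ℝ) < 1 - s := by linarith
    positivity
  · exact ha.1

open MeasureTheory Set intervalIntegral in
/-- `a ↦ In n x a` is strictly increasing on `(0, 1)`: its derivative there is
`Prim (x+2) (n-x) a / a² > 0`. -/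
lemma In_strictMonoOn (n x : ℕ) : StrictMonoOn (In n x) (Ioo (0:ℝ) 1) := by
  set g : ℝ → ℝ := fun a => Prim (x+1) (n-x) a - Prim (x+2) (n-x) a / a with hg
  have hgd : ∀ a ∈ Ioo (0:ℝ) 1, HasDerivAt g (Prim (x+2) (n-x) a / a ^ 2) a := by
    intro a ha
    have ha0 : a ≠ 0 := ne_of_gt ha.1
    have h1 := Prim_hasDerivAt (x+1) (n-x) a
    have h2 := (Prim_hasDerivAt (x+2) (n-x) a).div (hasDerivAt_id a) ha0
    have h := h1.sub h2
    refine h.congr_deriv ?_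
    simp only [id]
    field_simp
    ring
  have heqOn : EqOn (In n x) g (Ioo (0:ℝ) 1) := fun a ha => In_rep n x (ne_of_gt ha.1)
  have hderiv : ∀ a ∈ Ioo (0:ℝ) 1, HasDerivAt (In n x) (Prim (x+2) (n-x) a / a ^ 2) a := by
    intro a ha
    exact (hgd a ha).congr_of_eventuallyEq
      ((isOpen_Ioo.eventually_mem ha).mono fun b hb => heqOn hb)
  apply strictMonoOn_of_deriv_pos (convex_Ioo 0 1)
  · exact fun a ha => (hderiv a ha).continuousAt.continuousWithinAt
  · intro a ha
    rw [interior_Ioo] at ha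
    rw [(hderiv a ha).deriv]
    have := Prim_pos (x+2) (n-x) ha
    have := ha.1
    positivity

open Set in
/-- Uniqueness of the solution of `In n x a = In n (n - x) (1 - a)` in `(0, 1)`,
since the left side is strictly increasing and the right side strictly decreasing. -/
lemma In_unique (n x : ℕ) {σ τ : ℝ} (hσ : σ ∈ Ioo (0:ℝ) 1) (hτ : τ ∈ Ioo (0:ℝ) 1)
    (h1 : In n x σ = In n (n - x) (1 - σ)) (h2 : In n x τ = In n (n - x) (1 - τ)) :
    σ = τ := by
  have mem : ∀ b : ℝ, b ∈ Ioo (0:ℝ) 1 → (1 - b) ∈ Ioo (0:ℝ) 1 := by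
    intro b hb; exact ⟨by linarith [hb.2], by linarith [hb.1]⟩
  rcases lt_trichotomy σ τ with h | h | h
  · exfalso
    have a1 : In n x σ < In n x τ := In_strictMonoOn n x hσ hτ h
    have a2 : In n (n-x) (1-τ) < In n (n-x) (1-σ) :=
      In_strictMonoOn n (n-x) (mem τ hτ) (mem σ hσ) (by linarith)
    rw [h1, h2] at a1; linarith
  · exact h
  · exfalso
    have a1 : In n x τ < In n x σ := In_strictMonoOn n x hτ hσ h
    have a2 : In n (n-x) (1-σ) < In n (n-x) (1-τ) :=
      In_strictMonoOn n (n-x) (mem σ hσ) (mem τ hτ) (by linarith)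
    rw [h1, h2] at a1; linarith

/-- Symmetry of the iterative Bayes estimates: `p̂_IB(x) + p̂_IB(n − x) = 1`; in
particular `p̂_IB(x) = 1/2` when `n = 2x`. -/
theorem In_fixed_point_symm (n x : ℕ) (hx : x ≤ n)
    (τ τ' : ℝ) (hτ : τ ∈ Set.Ioo (0 : ℝ) 1) (hτ' : τ' ∈ Set.Ioo (0 : ℝ) 1)
    (heq : In n x τ = In n (n - x) (1 - τ))
    (heq' : In n (n - x) τ' = In n x (1 - τ')) :
    τ + τ' = 1 ∧ (n = 2 * x → τ = 1 / 2) := by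
  have hσ : (1 - τ') ∈ Set.Ioo (0:ℝ) 1 := ⟨by linarith [hτ'.2], by linarith [hτ'.1]⟩
  have hσeq : In n x (1 - τ') = In n (n - x) (1 - (1 - τ')) := by
    rw [show (1 : ℝ) - (1 - τ') = τ' by ring]; exact heq'.symm
  have h1 : τ = 1 - τ' := In_unique n x hτ hσ heq hσeq
  refine ⟨by linarith, fun hn => ?_⟩
  have hnx : n - x = x := by omega
  rw [hnx] at heq
  have hρ : (1 - τ) ∈ Set.Ioo (0:ℝ) 1 := ⟨by linarith [hτ.2], by linarith [hτ.1]⟩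
  have hρeq : In n x (1 - τ) = In n (n - x) (1 - (1 - τ)) := by
    rw [hnx, show (1 : ℝ) - (1 - τ) = τ by ring]; exact heq.symm
  have h2 : τ = 1 - τ := In_unique n x hτ hρ (by rw [hnx]; exact heq) hρeq
  linarith
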